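/- A topological group G is locally kω (its underlying space is locally kω) if and only if G has an open subgroup H whose underlying topological space is a kω-space. -/

import Mathlib

open Set Pointwise


/-- `K` is a kω-sequence for the topological space `X`: an ascending sequence of
compact subsets covering `X` such that the topology of `X` is final with respect
to the inclusions `K n → X`. -/
def IsKOmegaSeq {X : Type*} [TopologicalSpace X] (K : ℕ → Set X) : Prop :=
  (∀ n, IsCompact (K n)) ∧ Monotone K ∧ (⋃ n, K n) = Set.univ ∧
    ∀ U : Set X, IsOpen U ↔ ∀ n, IsOpen ((Subtype.val ⁻¹' U) : Set (K n))

/-- A kω-space: a Hausdorff space which is the direct limit of an ascending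
sequence of compact subsets. -/
def IsKOmega (X : Type*) [TopologicalSpace X] : Prop :=
  T2Space X ∧ ∃ K : ℕ → Set X, IsKOmegaSeq K

/-- A locally kω space: a Hausdorff space each point of which has an open
neighbourhood which is a kω-space in the induced topology. -/
def IsLocallyKOmega (X : Type*) [TopologicalSpace X] : Prop :=
  T2Space X ∧ ∀ x : X, ∃ U : Set X, IsOpen U ∧ x ∈ U ∧ IsKOmega U

/-- kω transfers along a homeomorphism. -/
lemma IsKOmega.congr {X Y : Type*} [TopologicalSpace X] [TopologicalSpace Y]
    (e : X ≃ₜ Y) (h : IsKOmega X) : IsKOmega Y := by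
  obtain ⟨ht, K, hc, hm, hu, hfin⟩ := h
  haveI := ht
  refine ⟨e.symm.isEmbedding.t2Space, fun n => e '' K n, fun n => (hc n).image e.continuous,
    fun a b hab => Set.image_mono (hm hab), ?_, ?_⟩
  · rw [← Set.image_iUnion, hu, Set.image_univ, e.surjective.range_eq]
  · intro U
    rw [← e.isOpen_preimage, hfin]
    refine forall_congr' fun n => ?_
    rw [← (e.image (K n)).isOpen_preimage]
    have : (e.image (K n)) ⁻¹' (Subtype.val ⁻¹' U) = Subtype.val ⁻¹' (⇑e ⁻¹' U) := by
      ext x; simp [Homeomorph.image, Equiv.image]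
    rw [this]

lemma IsCompact.set_pow {G : Type*} [Group G] [TopologicalSpace G] [IsTopologicalGroup G]
    {s : Set G} (hs : IsCompact s) : ∀ n : ℕ, IsCompact (s ^ (n + 1))
  | 0 => by simpa using hs
  | n + 1 => by rw [pow_succ]; exact (hs.set_pow n).mul hs

/-- A Hausdorff topological group is locally kω if and only if it has an open
subgroup which is a kω-group. -/
theorem isLocallyKOmega_iff_exists_open_kOmega_subgroup
    (G : Type*) [Group G] [TopologicalSpace G] [IsTopologicalGroup G] [T2Space G] :
    IsLocallyKOmega G ↔ ∃ H : Subgroup G, IsOpen (H : Set G) ∧ IsKOmega H := by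
  constructor
  · rintro ⟨-, hloc⟩
    obtain ⟨U, hUo, h1U, hUt2, KU, hKUc, hKUm, hKUu, hKUfin⟩ := hloc 1
    -- the compact sets of `U`, viewed in `G`
    set C : ℕ → Set G := fun n => Subtype.val '' KU n with hC
    have hCc : ∀ n, IsCompact (C n) := fun n => (hKUc n).image continuous_subtype_val
    have hCU : ∀ n, C n ⊆ U := fun n => by
      rintro x ⟨u, -, rfl⟩; exact u.2
    have hCm : Monotone C := fun a b hab => Set.image_mono (hKUm hab)
    have hCUnion : (⋃ n, C n) = U := by
      rw [hC, ← Set.image_iUnion, hKUu, Set.image_univ, Subtype.range_val]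
    -- symmetric generating sets and their powers
    set S : ℕ → Set G := fun n => C n ∪ (C n)⁻¹ ∪ {1} with hS
    have h1S : ∀ n, (1 : G) ∈ S n := fun n => Or.inr rfl
    have hSm : Monotone S := fun a b hab =>
      Set.union_subset_union (Set.union_subset_union (hCm hab) (Set.inv_subset_inv.2 (hCm hab)))
        subset_rfl
    have hSc : ∀ n, IsCompact (S n) := fun n =>
      (((hCc n).union (hCc n).inv).union isCompact_singleton)
    have hSinv : ∀ n, (S n)⁻¹ = S n := by
      intro n
      ext x
      simp only [hS, Set.mem_inv, Set.mem_union, Set.mem_singleton_iff, inv_eq_one,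
        Set.inv_mem_inv, inv_inv]
      tauto
    set L : ℕ → Set G := fun n => S n ^ (n + 1) with hL
    have hLc : ∀ n, IsCompact (L n) := fun n => (hSc n).set_pow n
    have hLm : Monotone L := fun a b hab =>
      Set.pow_subset_pow (hSm hab) (h1S b) (by omega)
    have hCsubL : ∀ n, C n ⊆ L n := fun n =>
      (Set.subset_union_left.trans Set.subset_union_left).trans
        (Set.subset_pow (h1S n) (by omega))
    have hLmul : ∀ p n, L p * L n ⊆ L (p + n + 1) := by
      intro p n
      have h1 : L p ⊆ S (p + n + 1) ^ (p + 1) :=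
        Set.pow_subset_pow_left (hSm (by omega))
      have h2 : L n ⊆ S (p + n + 1) ^ (n + 1) :=
        Set.pow_subset_pow_left (hSm (by omega))
      calc L p * L n ⊆ S (p + n + 1) ^ (p + 1) * S (p + n + 1) ^ (n + 1) :=
            Set.mul_subset_mul h1 h2
        _ = L (p + n + 1) := by rw [hL, ← pow_add]; ring_nf
    have hLinv : ∀ n, ∀ x ∈ L n, x⁻¹ ∈ L n := by
      intro n x hx
      have : (L n)⁻¹ = L n := by
        rw [hL]
        rw [← inv_pow, hSinv]
      rw [← this]
      exact Set.inv_mem_inv.2 hx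
    -- the subgroup
    set H : Subgroup G := Subgroup.closure U with hHdef
    have hUH : U ⊆ (H : Set G) := Subgroup.subset_closure
    have hLH : ∀ n, L n ⊆ (H : Set G) := by
      intro n
      have hSH : S n ⊆ (H : Set G) := by
        rintro x ((hx | hx) | hx)
        · exact hUH (hCU n hx)
        · have : x⁻¹ ∈ U := hCU n (Set.mem_inv.1 hx)
          simpa using H.inv_mem (hUH this)
        · rw [Set.mem_singleton_iff] at hx
          rw [hx]; exact H.one_mem
      have : ∀ k : ℕ, S n ^ k ⊆ (H : Set G) := by
        intro k
        induction k with
        | zero => simpa [Set.one_subset] using H.one_mem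
        | succ k ih =>
          rw [pow_succ]
          rintro x ⟨a, ha, b, hb, rfl⟩
          exact H.mul_mem (ih ha) (hSH hb)
      exact this (n + 1)
    have hHL : (H : Set G) ⊆ ⋃ n, L n := by
      intro x hx
      refine Subgroup.closure_induction (fun g hg => ?_) ?_ ?_ ?_ hx
      · rw [← hCUnion] at hg
        obtain ⟨n, hn⟩ := Set.mem_iUnion.1 hg
        exact Set.mem_iUnion.2 ⟨n, hCsubL n hn⟩
      · exact Set.mem_iUnion.2 ⟨0, Set.subset_pow (h1S 0) one_ne_zero (h1S 0)⟩
      · rintro a b - - ha hb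
        obtain ⟨p, hp⟩ := Set.mem_iUnion.1 ha
        obtain ⟨q, hq⟩ := Set.mem_iUnion.1 hb
        exact Set.mem_iUnion.2 ⟨p + q + 1, hLmul p q (Set.mul_mem_mul hp hq)⟩
      · rintro a - ha
        obtain ⟨p, hp⟩ := Set.mem_iUnion.1 ha
        exact Set.mem_iUnion.2 ⟨p, hLinv p a hp⟩
    have hHopen : IsOpen (H : Set G) :=
      H.isOpen_of_mem_nhds (Filter.mem_of_superset (hUo.mem_nhds h1U) hUH)
    refine ⟨H, hHopen, inferInstance, fun n => Subtype.val ⁻¹' L n, ?_, ?_, ?_, ?_⟩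
    · intro n
      rw [Subtype.isCompact_iff, Set.image_preimage_eq_of_subset]
      · exact hLc n
      · rw [Subtype.range_val]; exact hLH n
    · exact fun a b hab => Set.preimage_mono (hLm hab)
    · rw [← Set.preimage_iUnion, Set.eq_univ_iff_forall]
      exact fun h => Set.mem_preimage.2 (hHL h.2)
    · intro A
      constructor
      · exact fun hA n => hA.preimage continuous_subtype_val
      · intro hA
        -- translate the hypothesis to `G`-level open sets
        set B : Set G := Subtype.val '' A with hB
        have hBH : B ⊆ (H : Set G) := by rintro x ⟨a, -, rfl⟩; exact a.2
        have hmemB : ∀ (g : G) (hg : g ∈ H), ((⟨g, hg⟩ : H) ∈ A ↔ g ∈ B) := by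
          intro g hg
          constructor
          · exact fun h => ⟨⟨g, hg⟩, h, rfl⟩
          · rintro ⟨a, ha, h⟩
            have : a = ⟨g, hg⟩ := Subtype.ext h
            rwa [← this]
        have hO : ∀ n, ∃ O : Set G, IsOpen O ∧ ∀ g ∈ L n, (g ∈ B ↔ g ∈ O) := by
          intro n
          obtain ⟨T, hTopen, hTA⟩ := isOpen_induced_iff.1 (hA n)
          obtain ⟨O, hOopen, hOT⟩ := isOpen_induced_iff.1 hTopen
          refine ⟨O, hOopen, fun g hg => ?_⟩
          have hgH : g ∈ H := hLH n hg
          have hK : (⟨g, hgH⟩ : H) ∈ (Subtype.val ⁻¹' L n : Set H) := hg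
          have h1 : (⟨g, hgH⟩ : H) ∈ T ↔ (⟨g, hgH⟩ : H) ∈ A := by
            have := Set.ext_iff.1 hTA ⟨⟨g, hgH⟩, hK⟩
            simpa using this
          have h2 : (⟨g, hgH⟩ : H) ∈ T ↔ g ∈ O := by
            rw [← hOT]; rfl
          rw [← hmemB g hgH, ← h1, h2]
        -- B is open in G
        have hBopen : IsOpen B := by
          rw [isOpen_iff_mem_nhds]
          intro b hb
          obtain ⟨p, hbp⟩ := Set.mem_iUnion.1 (hHL (hBH hb))
          set A' : Set U := (fun u : U => b * (u : G)) ⁻¹' B with hA'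
          have hA'open : IsOpen A' := by
            rw [hKUfin]
            intro n
            obtain ⟨O, hOopen, hOB⟩ := hO (p + n + 1)
            have key : (Subtype.val ⁻¹' A' : Set (KU n)) =
                (fun k : KU n => b * ((k : U) : G)) ⁻¹' O := by
              ext k
              have hk : b * ((k : U) : G) ∈ L (p + n + 1) :=
                hLmul p n (Set.mul_mem_mul hbp (hCsubL n ⟨k.1, k.2, rfl⟩))
              exact hOB _ hk
            rw [show (Subtype.val ⁻¹' A' : Set (KU n)) =
                (fun k : KU n => b * ((k : U) : G)) ⁻¹' O from key]
            exact hOopen.preimage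
              (continuous_const.mul (continuous_subtype_val.comp continuous_subtype_val))
          obtain ⟨O', hO'open, hO'⟩ := isOpen_induced_iff.1 hA'open
          have h1O' : (1 : G) ∈ O' := by
            have : (⟨1, h1U⟩ : U) ∈ A' := by
              simp only [hA', Set.mem_preimage, mul_one]
              exact hb
            rw [← hO'] at this
            exact this
          have hN : IsOpen ((fun g => b * g) '' (U ∩ O')) := by
            have := (Homeomorph.mulLeft b).isOpen_image.2 (hUo.inter hO'open)
            exact this
          refine Filter.mem_of_superset (hN.mem_nhds ⟨1, ⟨h1U, h1O'⟩, mul_one b⟩) ?_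
          rintro x ⟨u, ⟨huU, huO'⟩, rfl⟩
          have : (⟨u, huU⟩ : U) ∈ A' := by rw [← hO']; exact huO'
          exact this
        have : A = Subtype.val ⁻¹' B := by
          rw [hB, Set.preimage_image_eq A Subtype.coe_injective]
        rw [this]
        exact hBopen.preimage continuous_subtype_val
  · rintro ⟨H, hHopen, hHk⟩
    refine ⟨inferInstance, fun x => ⟨⇑(Homeomorph.mulLeft x) '' (H : Set G), ?_, ?_, ?_⟩⟩
    · exact (Homeomorph.mulLeft x).isOpen_image.2 hHopen
    · exact ⟨1, H.one_mem, by simp⟩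
    · exact hHk.congr ((Homeomorph.mulLeft x).image (H : Set G))
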